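/- Let V be a finite set partitioned into five pairwise disjoint subsets X₀, X₁, X₂, X₃, X₄ with |X₀| = 1, |X₁| = k, |X₂| = 1, |X₃| = k, |X₄| = k, where k ≥ 1 is an integer, and for i ∈ ℤ/5ℤ set Yᵢ = Xᵢ ∪ Xᵢ₊₁ (indices modulo 5). Then the number of (3k−1)-element subsets S ⊆ V such that Yᵢ ⊄ S for every i equals k³ + 2k² + 2k. -/
import Mathlib

open Finset

private lemma triple_eq' {α : Type*} [DecidableEq α] {P Q R : Finset α}
    (hPQ : Disjoint P Q) (hPR : Disjoint P R) (hQR : Disjoint Q R)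
    {x y z x' y' z' : α} (hx : x ∈ P) (hy : y ∈ Q) (hz : z ∈ R)
    (hx' : x' ∈ P) (hy' : y' ∈ Q) (hz' : z' ∈ R)
    (h : ({x, y, z} : Finset α) = {x', y', z'}) : x = x' ∧ y = y' ∧ z = z' := by
  have hxm : x ∈ ({x', y', z'} : Finset α) := by rw [← h]; simp
  have hym : y ∈ ({x', y', z'} : Finset α) := by rw [← h]; simp
  have hzm : z ∈ ({x', y', z'} : Finset α) := by rw [← h]; simp
  simp only [Finset.mem_insert, Finset.mem_singleton] at hxm hym hzm
  refine ⟨?_, ?_, ?_⟩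
  · rcases hxm with h' | h' | h'
    · exact h'
    · exact (Finset.disjoint_left.mp hPQ hx (h' ▸ hy')).elim
    · exact (Finset.disjoint_left.mp hPR hx (h' ▸ hz')).elim
  · rcases hym with h' | h' | h'
    · exact (Finset.disjoint_left.mp hPQ (h' ▸ hx') hy).elim
    · exact h'
    · exact (Finset.disjoint_left.mp hQR hy (h' ▸ hz')).elim
  · rcases hzm with h' | h' | h'
    · exact (Finset.disjoint_left.mp hPR (h' ▸ hx') hz).elim
    · exact (Finset.disjoint_left.mp hQR (h' ▸ hy') hz).elim
    · exact h'

private lemma triple_card' {α : Type*} [DecidableEq α] {x y z : α}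
    (hxy : x ≠ y) (hxz : x ≠ z) (hyz : y ≠ z) :
    ({x, y, z} : Finset α).card = 3 := by
  rw [Finset.card_insert_of_notMem (by simp [hxy, hxz]),
    Finset.card_insert_of_notMem (by simp [hyz]), Finset.card_singleton]

theorem maximal_cone_count_example {α : Type*} [Fintype α] [DecidableEq α]
    (k : ℕ) (hk : 1 ≤ k)
    (X : Fin 5 → Finset α)
    (hdisj : ∀ i j : Fin 5, i ≠ j → Disjoint (X i) (X j))
    (hcover : ∀ a : α, ∃ i : Fin 5, a ∈ X i)
    (h0 : (X 0).card = 1) (h1 : (X 1).card = k) (h2 : (X 2).card = 1)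
    (h3 : (X 3).card = k) (h4 : (X 4).card = k) :
    {S : Finset α | S.card = 3 * k - 1 ∧ ∀ i : Fin 5, ¬ (X i ∪ X (i + 1)) ⊆ S}.ncard
      = k ^ 3 + 2 * k ^ 2 + 2 * k := by
  classical
  obtain ⟨a, ha0⟩ := Finset.card_eq_one.mp h0
  obtain ⟨c, hc2⟩ := Finset.card_eq_one.mp h2
  have ha : a ∈ X 0 := by rw [ha0]; simp
  have hc : c ∈ X 2 := by rw [hc2]; simp
  have muniq : ∀ {x : α} {i j : Fin 5}, x ∈ X i → x ∈ X j → i = j := by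
    intro x i j hxi hxj
    by_contra hne
    exact Finset.disjoint_left.mp (hdisj i j hne) hxi hxj
  have hcard : Fintype.card α = 3 * k + 2 := by
    have huniv : (Finset.univ : Finset α) = Finset.univ.biUnion X := by
      ext x
      simp only [Finset.mem_biUnion, Finset.mem_univ, true_iff, true_and]
      exact hcover x
    rw [← Finset.card_univ, huniv,
      Finset.card_biUnion (fun i _ j _ hij => hdisj i j hij)]
    rw [Fin.sum_univ_five, h0, h1, h2, h3, h4]; ring
  -- turn the set into a finset
  have key : {S : Finset α | S.card = 3 * k - 1 ∧ ∀ i : Fin 5, ¬ (X i ∪ X (i + 1)) ⊆ S}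
      = ↑((Finset.univ : Finset (Finset α)).filter
          fun S => S.card = 3 * k - 1 ∧ ∀ i : Fin 5, ¬ (X i ∪ X (i + 1)) ⊆ S) := by
    ext S; simp
  rw [key, Set.ncard_coe_finset]
  set t : Finset (Finset α) := (Finset.univ : Finset (Finset α)).filter
    (fun T => T.card = 3 ∧ ∀ i : Fin 5, ∃ x ∈ X i ∪ X (i + 1), x ∈ T) with ht_def
  -- complement bijection
  have hbij : ((Finset.univ : Finset (Finset α)).filter
      fun S => S.card = 3 * k - 1 ∧ ∀ i : Fin 5, ¬ (X i ∪ X (i + 1)) ⊆ S).card = t.card := by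
    apply Finset.card_bij (fun S _ => Sᶜ)
    · intro S hS
      simp only [Finset.mem_filter, Finset.mem_univ, true_and] at hS
      simp only [ht_def, Finset.mem_filter, Finset.mem_univ, true_and]
      constructor
      · rw [Finset.card_compl, hS.1, hcard]; omega
      · intro i
        obtain ⟨x, hxY, hxS⟩ := Finset.not_subset.mp (hS.2 i)
        exact ⟨x, hxY, Finset.mem_compl.mpr hxS⟩
    · intro S₁ h₁ S₂ h₂ h
      exact compl_injective h
    · intro T hT
      simp only [ht_def, Finset.mem_filter, Finset.mem_univ, true_and] at hT
      refine ⟨Tᶜ, ?_, by simp⟩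
      simp only [Finset.mem_filter, Finset.mem_univ, true_and]
      constructor
      · rw [Finset.card_compl, hT.1, hcard]; omega
      · intro i
        obtain ⟨x, hxY, hxT⟩ := hT.2 i
        exact Finset.not_subset.mpr ⟨x, hxY, by simp [hxT]⟩
  rw [hbij]
  -- the four pieces
  set A : Finset (Finset α) :=
    ((X 1 ×ˢ X 3 ×ˢ X 4).image fun p => ({p.1, p.2.1, p.2.2} : Finset α)) with hA_def
  set B : Finset (Finset α) :=
    ((X 1 ×ˢ X 3).image fun p => ({a, p.1, p.2} : Finset α)) with hB_def
  set C : Finset (Finset α) :=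
    ((X 1 ×ˢ X 4).image fun p => ({c, p.1, p.2} : Finset α)) with hC_def
  set D : Finset (Finset α) :=
    ((X 3 ∪ X 4).image fun w => ({a, c, w} : Finset α)) with hD_def
  have ne_mem : ∀ {x y : α} {i j : Fin 5}, x ∈ X i → y ∈ X j → i ≠ j → x ≠ y :=
    fun hx hy hij e => hij (muniq hx (e ▸ hy))
  have hac : a ≠ c := ne_mem ha hc (by decide)
  have memX0 : ∀ {x : α}, x ∈ X 0 → x = a := fun h => by
    rwa [ha0, Finset.mem_singleton] at h
  have memX2 : ∀ {x : α}, x ∈ X 2 → x = c := fun h => by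
    rwa [hc2, Finset.mem_singleton] at h
  -- hit lemma
  have hit_lemma : ∀ (T : Finset α), (∃ u ∈ T, u ∈ X 0 ∨ u ∈ X 1) →
      (∃ u ∈ T, u ∈ X 1 ∨ u ∈ X 2) → (∃ u ∈ T, u ∈ X 2 ∨ u ∈ X 3) →
      (∃ u ∈ T, u ∈ X 3 ∨ u ∈ X 4) → (∃ u ∈ T, u ∈ X 4 ∨ u ∈ X 0) →
      ∀ i : Fin 5, ∃ x ∈ X i ∪ X (i + 1), x ∈ T := by
    intro T g0 g1 g2 g3 g4 i
    fin_cases i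
    · obtain ⟨u, hu, hu'⟩ := g0; exact ⟨u, Finset.mem_union.mpr hu', hu⟩
    · obtain ⟨u, hu, hu'⟩ := g1; exact ⟨u, Finset.mem_union.mpr hu', hu⟩
    · obtain ⟨u, hu, hu'⟩ := g2; exact ⟨u, Finset.mem_union.mpr hu', hu⟩
    · obtain ⟨u, hu, hu'⟩ := g3; exact ⟨u, Finset.mem_union.mpr hu', hu⟩
    · obtain ⟨u, hu, hu'⟩ := g4; exact ⟨u, Finset.mem_union.mpr hu', hu⟩
  -- membership characterizations on a and c
  have hA' : ∀ T ∈ A, a ∉ T ∧ c ∉ T := by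
    intro T hT
    obtain ⟨p, hp, rfl⟩ := Finset.mem_image.mp hT
    simp only [Finset.mem_product] at hp
    obtain ⟨hp1, hp2, hp3⟩ := hp
    constructor
    · simp only [Finset.mem_insert, Finset.mem_singleton]
      push_neg
      exact ⟨ne_mem ha hp1 (by decide), ne_mem ha hp2 (by decide),
        ne_mem ha hp3 (by decide)⟩
    · simp only [Finset.mem_insert, Finset.mem_singleton]
      push_neg
      exact ⟨ne_mem hc hp1 (by decide), ne_mem hc hp2 (by decide),
        ne_mem hc hp3 (by decide)⟩
  have hB' : ∀ T ∈ B, a ∈ T ∧ c ∉ T := by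
    intro T hT
    obtain ⟨p, hp, rfl⟩ := Finset.mem_image.mp hT
    simp only [Finset.mem_product] at hp
    obtain ⟨hp1, hp2⟩ := hp
    refine ⟨by simp, ?_⟩
    simp only [Finset.mem_insert, Finset.mem_singleton]
    push_neg
    exact ⟨hac.symm, ne_mem hc hp1 (by decide), ne_mem hc hp2 (by decide)⟩
  have hC' : ∀ T ∈ C, a ∉ T ∧ c ∈ T := by
    intro T hT
    obtain ⟨p, hp, rfl⟩ := Finset.mem_image.mp hT
    simp only [Finset.mem_product] at hp
    obtain ⟨hp1, hp2⟩ := hp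
    refine ⟨?_, by simp⟩
    simp only [Finset.mem_insert, Finset.mem_singleton]
    push_neg
    exact ⟨hac, ne_mem ha hp1 (by decide), ne_mem ha hp2 (by decide)⟩
  have hD' : ∀ T ∈ D, a ∈ T ∧ c ∈ T := by
    intro T hT
    obtain ⟨w, _, rfl⟩ := Finset.mem_image.mp hT
    exact ⟨by simp, by simp⟩
  -- each piece lands in t
  have hAt : ∀ T ∈ A, T ∈ t := by
    intro T hT
    obtain ⟨p, hp, rfl⟩ := Finset.mem_image.mp hT
    simp only [Finset.mem_product] at hp
    obtain ⟨hp1, hp2, hp3⟩ := hp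
    simp only [ht_def, Finset.mem_filter, Finset.mem_univ, true_and]
    refine ⟨triple_card' (ne_mem hp1 hp2 (by decide)) (ne_mem hp1 hp3 (by decide))
      (ne_mem hp2 hp3 (by decide)), hit_lemma _ ?_ ?_ ?_ ?_ ?_⟩
    · exact ⟨p.1, by simp, Or.inr hp1⟩
    · exact ⟨p.1, by simp, Or.inl hp1⟩
    · exact ⟨p.2.1, by simp, Or.inr hp2⟩
    · exact ⟨p.2.1, by simp, Or.inl hp2⟩
    · exact ⟨p.2.2, by simp, Or.inl hp3⟩
  have hBt : ∀ T ∈ B, T ∈ t := by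
    intro T hT
    obtain ⟨p, hp, rfl⟩ := Finset.mem_image.mp hT
    simp only [Finset.mem_product] at hp
    obtain ⟨hp1, hp2⟩ := hp
    simp only [ht_def, Finset.mem_filter, Finset.mem_univ, true_and]
    refine ⟨triple_card' (ne_mem ha hp1 (by decide)) (ne_mem ha hp2 (by decide))
      (ne_mem hp1 hp2 (by decide)), hit_lemma _ ?_ ?_ ?_ ?_ ?_⟩
    · exact ⟨a, by simp, Or.inl ha⟩
    · exact ⟨p.1, by simp, Or.inl hp1⟩
    · exact ⟨p.2, by simp, Or.inr hp2⟩
    · exact ⟨p.2, by simp, Or.inl hp2⟩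
    · exact ⟨a, by simp, Or.inr ha⟩
  have hCt : ∀ T ∈ C, T ∈ t := by
    intro T hT
    obtain ⟨p, hp, rfl⟩ := Finset.mem_image.mp hT
    simp only [Finset.mem_product] at hp
    obtain ⟨hp1, hp2⟩ := hp
    simp only [ht_def, Finset.mem_filter, Finset.mem_univ, true_and]
    refine ⟨triple_card' (ne_mem hc hp1 (by decide)) (ne_mem hc hp2 (by decide))
      (ne_mem hp1 hp2 (by decide)), hit_lemma _ ?_ ?_ ?_ ?_ ?_⟩
    · exact ⟨p.1, by simp, Or.inr hp1⟩
    · exact ⟨c, by simp, Or.inr hc⟩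
    · exact ⟨c, by simp, Or.inl hc⟩
    · exact ⟨p.2, by simp, Or.inr hp2⟩
    · exact ⟨p.2, by simp, Or.inl hp2⟩
  have hDt : ∀ T ∈ D, T ∈ t := by
    intro T hT
    obtain ⟨w, hw, rfl⟩ := Finset.mem_image.mp hT
    have hwa : w ≠ a := by
      rcases Finset.mem_union.mp hw with h | h
      · exact ne_mem h ha (by decide)
      · exact ne_mem h ha (by decide)
    have hwc : w ≠ c := by
      rcases Finset.mem_union.mp hw with h | h
      · exact ne_mem h hc (by decide)
      · exact ne_mem h hc (by decide)
    simp only [ht_def, Finset.mem_filter, Finset.mem_univ, true_and]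
    refine ⟨triple_card' hac hwa.symm hwc.symm, hit_lemma _ ?_ ?_ ?_ ?_ ?_⟩
    · exact ⟨a, by simp, Or.inl ha⟩
    · exact ⟨c, by simp, Or.inr hc⟩
    · exact ⟨c, by simp, Or.inl hc⟩
    · exact ⟨w, by simp, Finset.mem_union.mp hw⟩
    · exact ⟨a, by simp, Or.inr ha⟩
  -- decomposition
  have htdec : t = A ∪ B ∪ C ∪ D := by
    apply Finset.Subset.antisymm
    · intro T hT
      simp only [ht_def, Finset.mem_filter, Finset.mem_univ, true_and] at hT
      obtain ⟨hT3, hhit⟩ := hT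
      have H0 := hhit 0
      have H1 := hhit 1
      have H2 := hhit 2
      have H3 := hhit 3
      have H4 := hhit 4
      rw [show ((0 : Fin 5) + 1) = 1 from rfl] at H0
      rw [show ((1 : Fin 5) + 1) = 2 from rfl] at H1
      rw [show ((2 : Fin 5) + 1) = 3 from rfl] at H2
      rw [show ((3 : Fin 5) + 1) = 4 from rfl] at H3
      rw [show ((4 : Fin 5) + 1) = 0 from rfl] at H4
      by_cases haT : a ∈ T <;> by_cases hcT : c ∈ T
      · -- a ∈ T, c ∈ T : piece D
        obtain ⟨w, hwY, hwT⟩ := H3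
        have hwa : w ≠ a := by
          rcases Finset.mem_union.mp hwY with h | h
          · exact ne_mem h ha (by decide)
          · exact ne_mem h ha (by decide)
        have hwc : w ≠ c := by
          rcases Finset.mem_union.mp hwY with h | h
          · exact ne_mem h hc (by decide)
          · exact ne_mem h hc (by decide)
        have hsub : ({a, c, w} : Finset α) ⊆ T :=
          Finset.insert_subset haT (Finset.insert_subset hcT
            (Finset.singleton_subset_iff.mpr hwT))
        have hTeq : ({a, c, w} : Finset α) = T :=
          Finset.eq_of_subset_of_card_le hsub
            (by rw [hT3, triple_card' hac hwa.symm hwc.symm])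
        have : T ∈ D := Finset.mem_image.mpr ⟨w, hwY, hTeq⟩
        exact Finset.mem_union_right _ this
      · -- a ∈ T, c ∉ T : piece B
        obtain ⟨x, hxY, hxT⟩ := H1
        have hx1 : x ∈ X 1 := by
          rcases Finset.mem_union.mp hxY with h | h
          · exact h
          · exact absurd hxT (by rw [memX2 h]; exact hcT)
        obtain ⟨y, hyY, hyT⟩ := H2
        have hy3 : y ∈ X 3 := by
          rcases Finset.mem_union.mp hyY with h | h
          · exact absurd hyT (by rw [memX2 h]; exact hcT)
          · exact h
        have hsub : ({a, x, y} : Finset α) ⊆ T :=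
          Finset.insert_subset haT (Finset.insert_subset hxT
            (Finset.singleton_subset_iff.mpr hyT))
        have hTeq : ({a, x, y} : Finset α) = T :=
          Finset.eq_of_subset_of_card_le hsub
            (by rw [hT3, triple_card' (ne_mem ha hx1 (by decide))
              (ne_mem ha hy3 (by decide)) (ne_mem hx1 hy3 (by decide))])
        have : T ∈ B := Finset.mem_image.mpr
          ⟨(x, y), Finset.mem_product.mpr ⟨hx1, hy3⟩, hTeq⟩
        exact Finset.mem_union_left _ (Finset.mem_union_left _
          (Finset.mem_union_right _ this))
      · -- a ∉ T, c ∈ T : piece C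
        obtain ⟨x, hxY, hxT⟩ := H0
        have hx1 : x ∈ X 1 := by
          rcases Finset.mem_union.mp hxY with h | h
          · exact absurd hxT (by rw [memX0 h]; exact haT)
          · exact h
        obtain ⟨z, hzY, hzT⟩ := H4
        have hz4 : z ∈ X 4 := by
          rcases Finset.mem_union.mp hzY with h | h
          · exact h
          · exact absurd hzT (by rw [memX0 h]; exact haT)
        have hsub : ({c, x, z} : Finset α) ⊆ T :=
          Finset.insert_subset hcT (Finset.insert_subset hxT
            (Finset.singleton_subset_iff.mpr hzT))
        have hTeq : ({c, x, z} : Finset α) = T :=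
          Finset.eq_of_subset_of_card_le hsub
            (by rw [hT3, triple_card' (ne_mem hc hx1 (by decide))
              (ne_mem hc hz4 (by decide)) (ne_mem hx1 hz4 (by decide))])
        have : T ∈ C := Finset.mem_image.mpr
          ⟨(x, z), Finset.mem_product.mpr ⟨hx1, hz4⟩, hTeq⟩
        exact Finset.mem_union_left _ (Finset.mem_union_right _ this)
      · -- a ∉ T, c ∉ T : piece A
        obtain ⟨x, hxY, hxT⟩ := H0
        have hx1 : x ∈ X 1 := by
          rcases Finset.mem_union.mp hxY with h | h
          · exact absurd hxT (by rw [memX0 h]; exact haT)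
          · exact h
        obtain ⟨y, hyY, hyT⟩ := H2
        have hy3 : y ∈ X 3 := by
          rcases Finset.mem_union.mp hyY with h | h
          · exact absurd hyT (by rw [memX2 h]; exact hcT)
          · exact h
        obtain ⟨z, hzY, hzT⟩ := H4
        have hz4 : z ∈ X 4 := by
          rcases Finset.mem_union.mp hzY with h | h
          · exact h
          · exact absurd hzT (by rw [memX0 h]; exact haT)
        have hsub : ({x, y, z} : Finset α) ⊆ T :=
          Finset.insert_subset hxT (Finset.insert_subset hyT
            (Finset.singleton_subset_iff.mpr hzT))
        have hTeq : ({x, y, z} : Finset α) = T :=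
          Finset.eq_of_subset_of_card_le hsub
            (by rw [hT3, triple_card' (ne_mem hx1 hy3 (by decide))
              (ne_mem hx1 hz4 (by decide)) (ne_mem hy3 hz4 (by decide))])
        have : T ∈ A := Finset.mem_image.mpr
          ⟨(x, (y, z)), Finset.mem_product.mpr ⟨hx1, Finset.mem_product.mpr ⟨hy3, hz4⟩⟩,
            hTeq⟩
        exact Finset.mem_union_left _ (Finset.mem_union_left _
          (Finset.mem_union_left _ this))
    · intro T hT
      rcases Finset.mem_union.mp hT with hT | hT
      · rcases Finset.mem_union.mp hT with hT | hT
        · rcases Finset.mem_union.mp hT with hT | hT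
          · exact hAt T hT
          · exact hBt T hT
        · exact hCt T hT
      · exact hDt T hT
  -- disjointness
  have dAB : Disjoint A B := Finset.disjoint_left.mpr fun T h1 h2 =>
    (hA' T h1).1 (hB' T h2).1
  have dABC : Disjoint (A ∪ B) C := Finset.disjoint_left.mpr fun T h1 h2 => by
    rcases Finset.mem_union.mp h1 with h | h
    · exact (hA' T h).2 (hC' T h2).2
    · exact (hC' T h2).1 (hB' T h).1
  have dABCD : Disjoint (A ∪ B ∪ C) D := Finset.disjoint_left.mpr fun T h1 h2 => by
    rcases Finset.mem_union.mp h1 with h | h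
    · rcases Finset.mem_union.mp h with h | h
      · exact (hA' T h).1 (hD' T h2).1
      · exact (hB' T h).2 (hD' T h2).2
    · exact (hC' T h).1 (hD' T h2).1
  -- cardinalities
  have cardA : A.card = k ^ 3 := by
    have hinj : Set.InjOn (fun p : α × α × α => ({p.1, p.2.1, p.2.2} : Finset α))
        ↑(X 1 ×ˢ X 3 ×ˢ X 4) := by
      rintro ⟨x, y, z⟩ hp ⟨x', y', z'⟩ hq h
      simp only [Finset.coe_product, Set.mem_prod, Finset.mem_coe] at hp hq
      obtain ⟨e1, e2, e3⟩ := triple_eq' (hdisj 1 3 (by decide)) (hdisj 1 4 (by decide))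
        (hdisj 3 4 (by decide)) hp.1 hp.2.1 hp.2.2 hq.1 hq.2.1 hq.2.2 h
      simp only [Prod.mk.injEq]
      exact ⟨e1, e2, e3⟩
    rw [hA_def, Finset.card_image_of_injOn hinj, Finset.card_product,
      Finset.card_product, h1, h3, h4]
    ring
  have cardB : B.card = k ^ 2 := by
    have hinj : Set.InjOn (fun p : α × α => ({a, p.1, p.2} : Finset α))
        ↑(X 1 ×ˢ X 3) := by
      rintro ⟨x, y⟩ hp ⟨x', y'⟩ hq h
      simp only [Finset.coe_product, Set.mem_prod, Finset.mem_coe] at hp hq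
      obtain ⟨_, e2, e3⟩ := triple_eq' (hdisj 0 1 (by decide)) (hdisj 0 3 (by decide))
        (hdisj 1 3 (by decide)) ha hp.1 hp.2 ha hq.1 hq.2 h
      simp only [Prod.mk.injEq]
      exact ⟨e2, e3⟩
    rw [hB_def, Finset.card_image_of_injOn hinj, Finset.card_product, h1, h3]
    ring
  have cardC : C.card = k ^ 2 := by
    have hinj : Set.InjOn (fun p : α × α => ({c, p.1, p.2} : Finset α))
        ↑(X 1 ×ˢ X 4) := by
      rintro ⟨x, y⟩ hp ⟨x', y'⟩ hq h
      simp only [Finset.coe_product, Set.mem_prod, Finset.mem_coe] at hp hq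
      obtain ⟨_, e2, e3⟩ := triple_eq' (hdisj 2 1 (by decide)) (hdisj 2 4 (by decide))
        (hdisj 1 4 (by decide)) hc hp.1 hp.2 hc hq.1 hq.2 h
      simp only [Prod.mk.injEq]
      exact ⟨e2, e3⟩
    rw [hC_def, Finset.card_image_of_injOn hinj, Finset.card_product, h1, h4]
    ring
  have cardD : D.card = 2 * k := by
    have hinj : Set.InjOn (fun w : α => ({a, c, w} : Finset α)) ↑(X 3 ∪ X 4) := by
      intro w hw w' hw' h
      have d1 : Disjoint (X 0) (X 3 ∪ X 4) :=
        Finset.disjoint_union_right.mpr ⟨hdisj 0 3 (by decide), hdisj 0 4 (by decide)⟩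
      have d2 : Disjoint (X 2) (X 3 ∪ X 4) :=
        Finset.disjoint_union_right.mpr ⟨hdisj 2 3 (by decide), hdisj 2 4 (by decide)⟩
      exact (triple_eq' (hdisj 0 2 (by decide)) d1 d2 ha hc
        (Finset.mem_coe.mp hw) ha hc (Finset.mem_coe.mp hw') h).2.2
    rw [hD_def, Finset.card_image_of_injOn hinj,
      Finset.card_union_of_disjoint (hdisj 3 4 (by decide)), h3, h4]
    ring
  rw [htdec, Finset.card_union_of_disjoint dABCD, Finset.card_union_of_disjoint dABC,
    Finset.card_union_of_disjoint dAB, cardA, cardB, cardC, cardD]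
  ring
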